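/- For every δ > 0 there exist constants C₁ > 0 and C₂ > 0 such that for all integers N ≥ 2, P_sync(δ/N, N) ≤ C₁ e^{−C₂ N}; that is, in the classical 1/N coupling scaling the probability of full synchrony decays exponentially fast in N. -/

import Mathlib

open Real Matrix Finset MeasureTheory ProbabilityTheory
open scoped ENNReal NNReal

/-- The Kuramoto interaction vector field `f_i(θ) = Σ_j sin (θ_j - θ_i)`. -/
noncomputable def kuraF (N : ℕ) (θ : Fin N → ℝ) : Fin N → ℝ :=
  fun i => ∑ j, Real.sin (θ j - θ i)

/-- The Jacobian `J(θ)`: `J_ij = cos (θ_i - θ_j)` off the diagonal and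
`J_ii = -Σ_{k ≠ i} cos (θ_k - θ_i)`. -/
noncomputable def Jmat (N : ℕ) (θ : Fin N → ℝ) : Matrix (Fin N) (Fin N) ℝ :=
  Matrix.of fun i j =>
    if i = j then -∑ k ∈ Finset.univ \ {i}, Real.cos (θ k - θ i)
    else Real.cos (θ i - θ j)

/-- The set of frequency samples `ω` for which the (mean-adjusted) Kuramoto system with
coupling `γ` has a stable fully synchronized solution: some `θ` with
`ω_i - (1/N) Σ_j ω_j + γ f_i(θ) = 0` for all `i` and `J(θ)` negative semidefinite with
one-dimensional kernel. -/
def syncSet (N : ℕ) (γ : ℝ) : Set (Fin N → ℝ) :=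
  {ω | ∃ θ : Fin N → ℝ,
    (∀ i, ω i - (∑ j, ω j) / N + γ * kuraF N θ i = 0) ∧
    (-(Jmat N θ)).PosSemidef ∧
    Module.finrank ℝ (LinearMap.ker (Matrix.toLin' (Jmat N θ))) = 1}

/-- `P_sync(γ, N)`: the probability, for `ω` a vector of `N` i.i.d. standard Gaussian
random variables, that the Kuramoto system with coupling `γ` fully synchronizes. -/
noncomputable def Psync (γ : ℝ) (N : ℕ) : ℝ :=
  ((Measure.pi fun _ : Fin N => gaussianReal 0 1) (syncSet N γ)).toReal

/-- The error function `erf x = (2/√π) ∫_0^x e^{-t²} dt`. -/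
noncomputable def erf (x : ℝ) : ℝ :=
  (2 / Real.sqrt Real.pi) * ∫ t in (0 : ℝ)..x, Real.exp (-t ^ 2)

lemma abs_kuraF_le (N : ℕ) (θ : Fin N → ℝ) (i : Fin N) : |kuraF N θ i| ≤ N := by
  calc |kuraF N θ i| ≤ ∑ j : Fin N, |Real.sin (θ j - θ i)| :=
        Finset.abs_sum_le_sum_abs _ _
    _ ≤ ∑ _j : Fin N, (1 : ℝ) :=
        Finset.sum_le_sum fun j _ => Real.abs_sin_le_one _
    _ = N := by simp

lemma syncSet_subset_tube (N : ℕ) (hN : 1 ≤ N) (δ : ℝ) (hδ : 0 < δ) :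
    syncSet N (δ / N) ⊆ {ω : Fin N → ℝ | ∀ i, |ω i - ω ⟨0, hN⟩| ≤ 2 * δ} := by
  rintro ω ⟨θ, hθ, -, -⟩
  have hNR : (0 : ℝ) < N := by exact_mod_cast hN
  have key : ∀ i, |ω i - (∑ j, ω j) / N| ≤ δ := by
    intro i
    have h := hθ i
    have : ω i - (∑ j, ω j) / N = -(δ / N * kuraF N θ i) := by linarith
    rw [this, abs_neg, abs_mul]
    have h1 : |δ / N| = δ / N := abs_of_pos (by positivity)
    rw [h1]
    calc δ / N * |kuraF N θ i| ≤ δ / N * N :=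
          mul_le_mul_of_nonneg_left (abs_kuraF_le N θ i) (by positivity)
      _ = δ := by field_simp
  intro i
  calc |ω i - ω ⟨0, hN⟩|
      ≤ |ω i - (∑ j, ω j) / N| + |ω ⟨0, hN⟩ - (∑ j, ω j) / N| := by
        rw [← abs_neg (ω ⟨0, hN⟩ - (∑ j, ω j) / N)]; exact abs_sub_le _ _ _ |>.trans (by rw [neg_sub])
    _ ≤ δ + δ := add_le_add (key i) (key _)
    _ = 2 * δ := by ring

lemma gaussian_interval_le (δ : ℝ) (hδ : 0 < δ) (x : ℝ) :
    (gaussianReal 0 1) (Set.Icc (x - 2*δ) (x + 2*δ))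
      ≤ 1 - min ((gaussianReal 0 1) (Set.Iio (-(2*δ)))) ((gaussianReal 0 1) (Set.Ioi (2*δ))) := by
  set ν : Measure ℝ := gaussianReal 0 1 with hν
  set p := min (ν (Set.Iio (-(2*δ)))) (ν (Set.Ioi (2*δ))) with hp
  have hpt : p ≠ ⊤ := by
    refine ne_top_of_le_ne_top (measure_ne_top ν _) (min_le_left _ _)
  refine ENNReal.le_sub_of_add_le_right hpt ?_
  rcases le_total 0 x with hx | hx
  · have hsub : Set.Iio (-(2*δ)) ⊆ Set.Iio (x - 2*δ) :=
      by
      intro t ht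
      simp only [Set.mem_Iio] at ht ⊢
      linarith
    have hdisj : Disjoint (Set.Icc (x - 2*δ) (x + 2*δ)) (Set.Iio (x - 2*δ)) := by
      rw [Set.disjoint_left]; rintro t ⟨h1, h2⟩ h3; simp at h3; linarith
    calc ν (Set.Icc (x - 2*δ) (x + 2*δ)) + p
        ≤ ν (Set.Icc (x - 2*δ) (x + 2*δ)) + ν (Set.Iio (x - 2*δ)) :=
          add_le_add_right (le_trans (min_le_left _ _) (measure_mono hsub)) _
      _ = ν (Set.Icc (x - 2*δ) (x + 2*δ) ∪ Set.Iio (x - 2*δ)) :=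
          (measure_union hdisj measurableSet_Iio).symm
      _ ≤ ν Set.univ := measure_mono (Set.subset_univ _)
      _ = 1 := measure_univ
  · have hsub : Set.Ioi (2*δ) ⊆ Set.Ioi (x + 2*δ) :=
      by
      intro t ht
      simp only [Set.mem_Ioi] at ht ⊢
      linarith
    have hdisj : Disjoint (Set.Icc (x - 2*δ) (x + 2*δ)) (Set.Ioi (x + 2*δ)) := by
      rw [Set.disjoint_left]; rintro t ⟨h1, h2⟩ h3; simp at h3; linarith
    calc ν (Set.Icc (x - 2*δ) (x + 2*δ)) + p
        ≤ ν (Set.Icc (x - 2*δ) (x + 2*δ)) + ν (Set.Ioi (x + 2*δ)) :=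
          add_le_add_right (le_trans (min_le_right _ _) (measure_mono hsub)) _
      _ = ν (Set.Icc (x - 2*δ) (x + 2*δ) ∪ Set.Ioi (x + 2*δ)) :=
          (measure_union hdisj measurableSet_Ioi).symm
      _ ≤ ν Set.univ := measure_mono (Set.subset_univ _)
      _ = 1 := measure_univ

lemma tube_bound (n : ℕ) (c : ℝ) (q : ℝ≥0∞)
    (hq : ∀ x : ℝ, (gaussianReal 0 1) (Set.Icc (x - c) (x + c)) ≤ q) :
    (Measure.pi fun _ : Fin (n+1) => gaussianReal 0 1)
      {ω : Fin (n+1) → ℝ | ∀ i, |ω i - ω 0| ≤ c} ≤ q ^ n := by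
  set ν : Measure ℝ := gaussianReal 0 1 with hν
  set A : Set (ℝ × (Fin n → ℝ)) := {p | ∀ j, |p.2 j - p.1| ≤ c} with hA_def
  have hA : MeasurableSet A := by
    have : A = ⋂ j, {p : ℝ × (Fin n → ℝ) | |p.2 j - p.1| ≤ c} := by
      ext p; simp [hA_def, Set.mem_iInter]
    rw [this]
    exact MeasurableSet.iInter fun j =>
      measurableSet_le (by fun_prop) measurable_const
  have hmp := measurePreserving_piFinSuccAbove (fun _ : Fin (n+1) => ν) 0
  set e := MeasurableEquiv.piFinSuccAbove (fun _ : Fin (n+1) => ℝ) 0 with he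
  have he_app : ∀ ω : Fin (n+1) → ℝ, e ω = (ω 0, fun j => ω (Fin.succAbove 0 j)) := by
    intro ω
    simp [he, MeasurableEquiv.piFinSuccAbove, Fin.removeNth]
    rfl
  have hsub : {ω : Fin (n+1) → ℝ | ∀ i, |ω i - ω 0| ≤ c} ⊆ e ⁻¹' A := by
    intro ω hω
    simp only [Set.mem_preimage, he_app, hA_def, Set.mem_setOf_eq]
    intro j
    exact hω _
  have hsection : ∀ x : ℝ, Prod.mk x ⁻¹' A = Set.univ.pi fun _ : Fin n => Set.Icc (x - c) (x + c) := by
    intro x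
    ext y
    simp only [Set.mem_preimage, hA_def, Set.mem_setOf_eq, Set.mem_pi, Set.mem_univ, true_implies,
      Set.mem_Icc, abs_le]
    constructor
    · intro h j; have := h j; constructor <;> linarith [this.1, this.2]
    · intro h j; have := h j; constructor <;> linarith [this.1, this.2]
  calc (Measure.pi fun _ : Fin (n+1) => ν) {ω : Fin (n+1) → ℝ | ∀ i, |ω i - ω 0| ≤ c}
      ≤ (Measure.pi fun _ : Fin (n+1) => ν) (e ⁻¹' A) := measure_mono hsub
    _ = (ν.prod (Measure.pi fun _ : Fin n => ν)) A :=
        hmp.measure_preimage hA.nullMeasurableSet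
    _ = ∫⁻ x, (Measure.pi fun _ : Fin n => ν) (Prod.mk x ⁻¹' A) ∂ν := Measure.prod_apply hA
    _ ≤ ∫⁻ _x, q ^ n ∂ν := by
        refine lintegral_mono fun x => ?_
        rw [hsection x, Measure.pi_pi]
        calc ∏ _j : Fin n, ν (Set.Icc (x - c) (x + c))
            ≤ ∏ _j : Fin n, q := Finset.prod_le_prod' (fun j _ => hq x)
          _ = q ^ n := by simp
    _ = q ^ n := by simp

theorem stmt19 (δ : ℝ) (hδ : 0 < δ) :
    ∃ C₁ > (0 : ℝ), ∃ C₂ > (0 : ℝ), ∀ N : ℕ, 2 ≤ N →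
      Psync (δ / N) N ≤ C₁ * Real.exp (-C₂ * N) := by
  set ν : Measure ℝ := gaussianReal 0 1 with hν
  set p : ℝ≥0∞ := min (ν (Set.Iio (-(2*δ)))) (ν (Set.Ioi (2*δ))) with hp
  have habs := gaussianReal_absolutelyContinuous' 0 (v := 1) one_ne_zero
  have hp0 : p ≠ 0 := by
    rw [hp]
    intro h
    rcases min_eq_iff.mp h with ⟨h1, -⟩ | ⟨h1, -⟩
    · have := habs h1
      rw [Real.volume_Iio] at this
      exact ENNReal.top_ne_zero this
    · have := habs h1
      rw [Real.volume_Ioi] at this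
      exact ENNReal.top_ne_zero this
  set q : ℝ≥0∞ := 1 - p with hq_def
  have hq1 : q < 1 := ENNReal.sub_lt_self ENNReal.one_ne_top one_ne_zero hp0
  have hqt : q ≠ ⊤ := (hq1.trans ENNReal.one_lt_top).ne
  set qr : ℝ := q.toReal with hqr_def
  have hqr0 : 0 ≤ qr := ENNReal.toReal_nonneg
  have hqr1 : qr < 1 := by
    have := (ENNReal.toReal_lt_toReal hqt ENNReal.one_ne_top).mpr hq1
    simpa using this
  set b : ℝ := max qr (Real.exp (-1)) with hb_def
  have hb0 : 0 < b := lt_of_lt_of_le (Real.exp_pos _) (le_max_right _ _)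
  have hb1 : b < 1 := max_lt hqr1 (by
    have := Real.exp_lt_one_iff.mpr (by norm_num : (-1 : ℝ) < 0)
    exact this)
  have hlogb : Real.log b < 0 := Real.log_neg hb0 hb1
  refine ⟨Real.exp (-Real.log b), Real.exp_pos _, -Real.log b, by linarith, ?_⟩
  intro N hN
  obtain ⟨n, rfl⟩ : ∃ n, N = n + 1 := ⟨N - 1, by omega⟩
  have hN1 : 1 ≤ n + 1 := by omega
  -- measure bound
  have hsub := syncSet_subset_tube (n+1) hN1 δ hδ
  have hzero : (⟨0, hN1⟩ : Fin (n+1)) = 0 := rfl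
  have hmeas : (Measure.pi fun _ : Fin (n+1) => ν)
      (syncSet (n+1) (δ / ((n+1 : ℕ) : ℝ))) ≤ q ^ n := by
    refine le_trans (measure_mono ?_) (tube_bound n (2*δ) q ?_)
    · intro ω hω
      have := hsub hω
      simpa [hzero] using this
    · intro x
      exact gaussian_interval_le δ hδ x
  have hPsync : Psync (δ / (n+1 : ℕ)) (n+1) ≤ qr ^ n := by
    rw [Psync]
    calc ((Measure.pi fun _ : Fin (n+1) => gaussianReal 0 1) (syncSet (n+1) (δ / (n+1 : ℕ)))).toReal
        ≤ (q ^ n).toReal := by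
          refine ENNReal.toReal_mono (by simp [ENNReal.pow_ne_top hqt]) ?_
          exact hmeas
      _ = qr ^ n := ENNReal.toReal_pow _ _
  calc Psync (δ / (n+1 : ℕ)) (n+1) ≤ qr ^ n := hPsync
    _ ≤ b ^ n := pow_le_pow_left₀ hqr0 (le_max_left _ _) n
    _ = Real.exp (-Real.log b) * Real.exp (-(-Real.log b) * ((n+1 : ℕ) : ℝ)) := by
        have hbn : b ^ n = Real.exp ((n : ℝ) * Real.log b) := by
          rw [Real.exp_nat_mul, Real.exp_log hb0]
        rw [hbn, ← Real.exp_add]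
        congr 1
        push_cast
        ring
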